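/- Let X_t = e^{At}X_0 + ∫₀^t e^{A(t-u)} e dB_u be the solution of the linear SDE dX = AX dt + e dB with X_0 independent of B, A = [[0,1],[-α,-γ]], e = (0,σ)ᵀ. Then, writing X_{nh} = (x_{nh}, y_{nh}), the first coordinate satisfies x_{(n+2)h} = trace(e^{Ah}) x_{(n+1)h} - e^{-γh} x_{nh} - a₂₂ W_{n+1,1} + W_{n+2,1} + a₁₂ W_{n+1,2}, where a_ij = (e^{Ah})_{ij}, W_{n+1,i} = σ∫₀^h (e^{A(h-u)})_{i2} dB(nh+u), provided a₁₂ ≠ 0. -/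

import Mathlib

open NormedSpace Matrix
attribute [local instance] Matrix.linftyOpNormedRing Matrix.linftyOpNormedAlgebra

noncomputable section

lemma exp_sq_zero {A : Matrix (Fin 2) (Fin 2) ℂ} (h : A * A = 0) :
    NormedSpace.exp A = 1 + A := by
  rw [exp_eq_tsum ℂ]
  simp only []
  rw [tsum_eq_sum (s := Finset.range 2)]
  · simp [Finset.sum_range_succ]
  · intro n hn
    have hn2 : 2 ≤ n := by simp at hn; omega
    have : A ^ n = 0 := by
      have : A ^ n = A ^ 2 * A ^ (n - 2) := by rw [← pow_add]; congr 1; omega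
      rw [this, pow_two, h, zero_mul]
    simp [this]

lemma det_exp_of_conj (M P : Matrix (Fin 2) (Fin 2) ℂ) (l₁ l₂ : ℂ)
    (hP : P.det ≠ 0) (hMP : M * P = P * Matrix.diagonal ![l₁, l₂]) :
    (NormedSpace.exp M).det = Complex.exp (l₁ + l₂) := by
  have hPunit : IsUnit P := (Matrix.isUnit_iff_isUnit_det P).2 (isUnit_iff_ne_zero.2 hP)
  have hPP : P * P⁻¹ = 1 := Matrix.mul_nonsing_inv P (isUnit_iff_ne_zero.2 hP)
  have hconj : M = P * Matrix.diagonal ![l₁, l₂] * P⁻¹ := by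
    rw [← hMP, Matrix.mul_assoc, hPP, Matrix.mul_one]
  rw [hconj, Matrix.exp_conj P (Matrix.diagonal ![l₁, l₂]) hPunit, Matrix.det_mul, Matrix.det_mul,
    Matrix.exp_diagonal, Matrix.det_diagonal, Matrix.det_nonsing_inv]
  rw [Fin.prod_univ_two]
  simp only [Pi.coe_exp, Matrix.cons_val_zero, Matrix.cons_val_one, Matrix.head_cons]
  rw [← Complex.exp_eq_exp_ℂ, ← Complex.exp_add]
  rw [Ring.inverse_eq_inv]
  field_simp

lemma det_exp_c (p q r : ℂ) :
    (NormedSpace.exp !![0, q; r, p]).det = Complex.exp p := by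
  set M : Matrix (Fin 2) (Fin 2) ℂ := !![0, q; r, p] with hM
  obtain ⟨s, hs⟩ : ∃ s : ℂ, s ^ 2 = p ^ 2 + 4 * q * r :=
    IsAlgClosed.exists_pow_nat_eq _ two_pos
  by_cases hs0 : s = 0
  · -- double root case: M = (p/2) • 1 + N, N² = 0
    have hqr : 4 * q * r = -p ^ 2 := by
      have h' := hs; rw [hs0] at h'; linear_combination -h'
    set N : Matrix (Fin 2) (Fin 2) ℂ := !![-(p/2), q; r, p/2] with hN
    have hN2 : N * N = 0 := by
      rw [hN, Matrix.mul_fin_two]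
      ext i j
      fin_cases i <;> fin_cases j <;> simp <;>
        first
        | ring1
        | linear_combination (1/4 : ℂ) * hqr
    have hMsplit : M = (p/2) • (1 : Matrix (Fin 2) (Fin 2) ℂ) + N := by
      ext i j
      fin_cases i <;> fin_cases j <;> simp [hM, hN, Matrix.one_apply] <;> ring
    have hcomm : Commute ((p/2) • (1 : Matrix (Fin 2) (Fin 2) ℂ)) N :=
      (Commute.one_left N).smul_left (p/2)
    have hexp1 : NormedSpace.exp ((p/2) • (1 : Matrix (Fin 2) (Fin 2) ℂ))
        = Complex.exp (p/2) • 1 := by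
      have h1 : (p/2) • (1 : Matrix (Fin 2) (Fin 2) ℂ)
          = algebraMap ℂ (Matrix (Fin 2) (Fin 2) ℂ) (p/2) :=
        (Algebra.algebraMap_eq_smul_one _).symm
      rw [h1]
      exact (algebraMap_exp_comm (𝔸 := Matrix (Fin 2) (Fin 2) ℂ) (p/2)).symm.trans
        (by rw [Algebra.algebraMap_eq_smul_one, Complex.exp_eq_exp_ℂ])
    rw [hMsplit, Matrix.exp_add_of_commute _ _ hcomm, hexp1,
      exp_sq_zero hN2, smul_one_mul, Matrix.det_smul]
    have h2 : (1 : Matrix (Fin 2) (Fin 2) ℂ) + N = !![1 - p/2, q; r, 1 + p/2] := by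
      ext i j
      fin_cases i <;> fin_cases j <;> simp [hN, Matrix.one_apply] <;> ring
    rw [h2, Matrix.det_fin_two_of]
    have h3 : (1 - p/2) * (1 + p/2) - q * r = 1 := by
      linear_combination (-1/4 : ℂ) * hqr
    rw [h3]
    rw [Fintype.card_fin]
    rw [mul_one, ← Complex.exp_nat_mul]
    congr 1
    push_cast
    ring
  · set l₁ : ℂ := (p + s) / 2 with hl1
    set l₂ : ℂ := (p - s) / 2 with hl2
    have hroot1 : l₁ ^ 2 = p * l₁ + q * r := by
      rw [hl1]; linear_combination (1/4 : ℂ) * hs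
    have hroot2 : l₂ ^ 2 = p * l₂ + q * r := by
      rw [hl2]; linear_combination (1/4 : ℂ) * hs
    by_cases hq : q = 0
    · -- lower triangular; p ≠ 0 since s ≠ 0
      have hp : p ≠ 0 := by
        intro hp0
        apply hs0
        have : s ^ 2 = 0 := by rw [hs, hp0, hq]; ring
        exact pow_eq_zero_iff two_ne_zero |>.1 this
      have := det_exp_of_conj M !![p, 0; -r, 1] 0 p
        (by rw [Matrix.det_fin_two_of]; simpa using hp)
        (by
          ext i j
          fin_cases i <;> fin_cases j <;>
            simp [hM, hq, Matrix.mul_apply, Fin.sum_univ_two, Matrix.diagonal] <;> ring)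
      rwa [zero_add] at this
    · have := det_exp_of_conj M !![q, q; l₁, l₂] l₁ l₂
        (by
          rw [Matrix.det_fin_two_of]
          have he : q * l₂ - q * l₁ = -(q * s) := by rw [hl1, hl2]; ring
          rw [he]
          simp [hq, hs0])
        (by
          ext i j
          fin_cases i <;> fin_cases j <;>
            simp [hM, Matrix.mul_apply, Fin.sum_univ_two, Matrix.diagonal] <;>
            first
            | ring1
            | linear_combination hroot1
            | linear_combination hroot2
            | linear_combination -hroot1
            | linear_combination -hroot2)
      rw [this, hl1, hl2]
      congr 1
      ring

lemma det_exp_r (α γ h : ℝ) :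
    (NormedSpace.exp (h • (!![0, 1; -α, -γ] : Matrix (Fin 2) (Fin 2) ℝ))).det
      = Real.exp (-γ * h) := by
  set M : Matrix (Fin 2) (Fin 2) ℝ := h • !![0, 1; -α, -γ] with hMdef
  have hmapM : M.map (algebraMap ℝ ℂ) = !![0, (h : ℂ); -(α * h), -(γ * h)] := by
    ext i j
    fin_cases i <;> fin_cases j <;>
      simp [hMdef, Matrix.map_apply, Matrix.smul_apply] <;> push_cast <;> ring
  have hcont : Continuous ((algebraMap ℝ ℂ).mapMatrix :
      Matrix (Fin 2) (Fin 2) ℝ →+* Matrix (Fin 2) (Fin 2) ℂ) := by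
    have he : (⇑((algebraMap ℝ ℂ).mapMatrix) : Matrix (Fin 2) (Fin 2) ℝ → _)
        = fun A => A.map (algebraMap ℝ ℂ) := funext fun A => RingHom.mapMatrix_apply _ A
    rw [he]
    exact continuous_id.matrix_map (continuous_algebraMap ℝ ℂ)
  have h2 : (NormedSpace.exp M).map (algebraMap ℝ ℂ)
      = NormedSpace.exp (M.map (algebraMap ℝ ℂ)) := by
    have := NormedSpace.map_exp ((algebraMap ℝ ℂ).mapMatrix) hcont M
    rw [RingHom.mapMatrix_apply, RingHom.mapMatrix_apply] at this
    exact this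
  have h1 : ((NormedSpace.exp M).det : ℂ)
      = ((NormedSpace.exp M).map (algebraMap ℝ ℂ)).det := by
    have := RingHom.map_det (algebraMap ℝ ℂ) (NormedSpace.exp M)
    rwa [RingHom.mapMatrix_apply] at this
  have h3 : ((NormedSpace.exp M).det : ℂ) = (Real.exp (-γ * h) : ℂ) := by
    rw [h1, h2, hmapM, det_exp_c (-(γ * h)) h (-(α * h)), Complex.ofReal_exp]
    congr 1
    push_cast
    ring
  exact_mod_cast h3

end

/-- Elimination of the unobserved velocity from the exact discrete-time recursion for the
linear Langevin system.  The solution `X_t = e^{At}X_0 + ∫₀^t e^{A(t-u)} e dB_u` satisfies,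
at discrete times, the one-step recursion
`x_{(n+1)h} = a₁₁ x_{nh} + a₁₂ y_{nh} + W_{n+1,1}`,
`y_{(n+1)h} = a₂₁ x_{nh} + a₂₂ y_{nh} + W_{n+1,2}`, with `a_{ij} = (e^{Ah})_{ij}` and
`W_{n+1,i} = σ∫₀^h (e^{A(h-u)})_{i2} dB(nh+u)`; here these recursions are taken as
hypotheses.  Provided `a₁₂ ≠ 0`, the observed coordinate satisfies
`x_{(n+2)h} = trace(e^{Ah}) x_{(n+1)h} - e^{-γh} x_{nh}
  - a₂₂ W_{n+1,1} + W_{n+2,1} + a₁₂ W_{n+1,2}`. -/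
theorem stmt_11 {Ω : Type*} (α γ σ h : ℝ) (hh : 0 < h)
    (A : Matrix (Fin 2) (Fin 2) ℝ) (hA : A = !![0, 1; -α, -γ])
    (a : Matrix (Fin 2) (Fin 2) ℝ) (ha : a = NormedSpace.exp (h • A))
    (ha12 : a 0 1 ≠ 0)
    (x y : ℕ → Ω → ℝ) (W : ℕ → Fin 2 → Ω → ℝ)
    (hx : ∀ n ω, x (n + 1) ω = a 0 0 * x n ω + a 0 1 * y n ω + W (n + 1) 0 ω)
    (hy : ∀ n ω, y (n + 1) ω = a 1 0 * x n ω + a 1 1 * y n ω + W (n + 1) 1 ω) :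
    ∀ n ω, x (n + 2) ω
      = a.trace * x (n + 1) ω - Real.exp (-γ * h) * x n ω
        - a 1 1 * W (n + 1) 0 ω + W (n + 2) 0 ω + a 0 1 * W (n + 1) 1 ω := by
  intro n ω
  have hdet : a 0 0 * a 1 1 - a 0 1 * a 1 0 = Real.exp (-γ * h) := by
    have hd : a.det = Real.exp (-γ * h) := by
      rw [ha, hA]; exact det_exp_r α γ h
    rwa [Matrix.det_fin_two] at hd
  rw [Matrix.trace_fin_two]
  have h1 := hx (n + 1) ω
  have h2 := hy n ω
  have h3 := hx n ω
  linear_combination h1 - a 1 1 * h3 + a 0 1 * h2 - x n ω * hdet
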